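/- For every C₀ ≥ 1 there exist C > 0 and N ∈ ℕ with the following property. Let n ≥ N be an integer, let M, N′ be integers with 1 ≤ M, N′ ≤ C₀·n, let d_{−M} < ⋯ < d_{N′} be integers with |d_i| ≤ C₀·n, and let x₂, t₂ be integers with |x₂| ≤ C₀·n and 1 ≤ t₂ ≤ C₀·n. Define, for z in the open upper half-plane ℍ, R(z) := (1/n)·∑_{i=−M}^{N′} log|z − d_i/n| + (1/n)·∑_{i=−x₂+1}^{−x₂+t₂−1} log|z + i/n| − (1/n)·log|sin(π n z)| (note sin(π n z) ≠ 0 for z ∈ ℍ). Then for every z ∈ ℍ with |z| > n, |R(z) + π·Im z| ≤ C·( max(0, −n^{−1}·log(min_{i ∈ ℤ} |nz − i|)) + log|z| ). -/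

import Mathlib

private lemma aux_abs_sin_sq (x y : ℝ) :
    ‖Complex.sin ((x : ℂ) + (y : ℂ) * Complex.I)‖ ^ 2
      = Real.sin x ^ 2 * Real.cosh y ^ 2 + Real.cos x ^ 2 * Real.sinh y ^ 2 := by
  rw [Complex.sin_add_mul_I, ← Complex.ofReal_sin, ← Complex.ofReal_cos,
    ← Complex.ofReal_sinh, ← Complex.ofReal_cosh, ← Complex.ofReal_mul, ← Complex.ofReal_mul,
    Complex.norm_add_mul_I, Real.sq_sqrt (by positivity)]
  ring

private lemma aux_sin_upper (W : ℂ) (h : 0 ≤ W.im) :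
    ‖Complex.sin W‖ ≤ Real.exp W.im := by
  rw [Complex.sin]
  have h1 : ‖(Complex.exp (-W * Complex.I) - Complex.exp (W * Complex.I))
      * Complex.I / 2‖
      ≤ (‖Complex.exp (-W * Complex.I)‖ + ‖Complex.exp (W * Complex.I)‖) / 2 := by
    rw [norm_div, norm_mul, Complex.norm_I, mul_one, Complex.norm_ofNat]
    gcongr
    exact norm_sub_le _ _
  refine h1.trans ?_
  rw [Complex.norm_exp, Complex.norm_exp]
  have h2 : (-W * Complex.I).re = W.im := by simp
  have h3 : (W * Complex.I).re = -W.im := by simp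
  rw [h2, h3]
  have h4 : Real.exp (-W.im) ≤ Real.exp W.im := Real.exp_le_exp.2 (by linarith)
  linarith

private lemma aux_sin_lower_big (W : ℂ) (h : 1 ≤ W.im) :
    Real.exp W.im / 4 ≤ ‖Complex.sin W‖ := by
  rw [Complex.sin]
  set A := Complex.exp (-W * Complex.I)
  set B := Complex.exp (W * Complex.I)
  have h1 : ‖A‖ - ‖B‖ ≤ ‖A - B‖ := by
    have := norm_add_le (A - B) B
    rw [sub_add_cancel] at this
    linarith
  have h2 : (-W * Complex.I).re = W.im := by simp
  have h3 : (W * Complex.I).re = -W.im := by simp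
  rw [norm_div, norm_mul, Complex.norm_I, mul_one, Complex.norm_ofNat]
  rw [Complex.norm_exp, Complex.norm_exp, h2, h3] at h1
  have h5 : Real.exp (-W.im) ≤ Real.exp W.im / 2 := by
    have he : (2:ℝ) ≤ Real.exp 1 := by
      have := Real.exp_one_gt_d9; linarith
    have h6 : (2:ℝ) ≤ Real.exp W.im := le_trans he (Real.exp_le_exp.2 h)
    have h8 : Real.exp (-W.im) ≤ Real.exp (-1) := Real.exp_le_exp.2 (by linarith)
    have h9 : Real.exp (-1) * Real.exp 1 = 1 := by
      rw [← Real.exp_add]; norm_num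
    nlinarith [Real.exp_pos (-(1:ℝ))]
  linarith

private lemma aux_sin_lower_small (u : ℂ) (hre : |u.re| ≤ 1/2) (him : 0 ≤ u.im) :
    ‖u‖ ≤ ‖Complex.sin ((Real.pi : ℂ) * u)‖ := by
  have hπ := Real.pi_pos
  have h1 : ((Real.pi : ℂ) * u) = ((Real.pi * u.re : ℝ) : ℂ) + ((Real.pi * u.im : ℝ) : ℂ) * Complex.I := by
    apply Complex.ext <;> simp
  have key : ‖u‖ ^ 2 ≤ ‖Complex.sin ((Real.pi:ℂ) * u)‖ ^ 2 := by
    rw [h1, aux_abs_sin_sq]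
    have hs : 2 * |u.re| ≤ |Real.sin (Real.pi * u.re)| := by
      have hb : |Real.pi * u.re| ≤ Real.pi / 2 := by
        rw [abs_mul, abs_of_pos hπ]
        nlinarith [abs_nonneg u.re]
      have := Real.mul_abs_le_abs_sin hb
      rw [abs_mul, abs_of_pos hπ] at this
      calc 2 * |u.re| = 2 / Real.pi * (Real.pi * |u.re|) := by field_simp
        _ ≤ _ := this
    have h4 : 4 * u.re ^ 2 ≤ Real.sin (Real.pi * u.re) ^ 2 := by
      nlinarith [abs_nonneg u.re, abs_nonneg (Real.sin (Real.pi * u.re)),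
        sq_abs u.re, sq_abs (Real.sin (Real.pi * u.re))]
    have hsh : u.im ≤ Real.sinh (Real.pi * u.im) := by
      have h2 : Real.pi * u.im ≤ Real.sinh (Real.pi * u.im) :=
        Real.self_le_sinh_iff.2 (by positivity)
      nlinarith [mul_nonneg (by linarith [Real.pi_gt_three] : (0:ℝ) ≤ Real.pi - 1) him]
    have him2 : u.im ^ 2 ≤ Real.sinh (Real.pi * u.im) ^ 2 := by nlinarith
    have hpyth := Real.sin_sq_add_cos_sq (Real.pi * u.re)
    have hch2 := Real.cosh_sq (Real.pi * u.im)
    have habs : ‖u‖ ^ 2 = u.re ^ 2 + u.im ^ 2 := by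
      rw [Complex.sq_norm, Complex.normSq_apply]; ring
    rw [habs]
    nlinarith [sq_nonneg (Real.sin (Real.pi * u.re)), sq_nonneg (Real.cos (Real.pi * u.re)),
      sq_nonneg (Real.sinh (Real.pi * u.im))]
  exact (pow_le_pow_iff_left₀ (norm_nonneg _) (norm_nonneg _) two_ne_zero).1 key

private lemma aux_log_term (z a : ℂ) (hz : 3 ≤ ‖z‖)
    (ha : ‖a‖ ≤ ‖z‖ / 2) :
    |Real.log (‖z - a‖)| ≤ 2 * Real.log (‖z‖) := by
  set r := ‖z‖ with hr
  have hb1 : r / 2 ≤ ‖z - a‖ := by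
    have := norm_add_le (z - a) a
    rw [sub_add_cancel] at this
    linarith
  have hb2 : ‖z - a‖ ≤ r ^ 2 := by
    have := norm_sub_le z a
    nlinarith
  have hlog0 : (0:ℝ) ≤ Real.log (r / 2) := Real.log_nonneg (by linarith)
  have hlog1 : Real.log (r / 2) ≤ Real.log (‖z - a‖) :=
    Real.log_le_log (by linarith) hb1
  have hlog2 : Real.log (‖z - a‖) ≤ Real.log (r ^ 2) :=
    Real.log_le_log (by linarith) hb2
  rw [Real.log_pow] at hlog2
  have hrlog : (0:ℝ) ≤ Real.log r := Real.log_nonneg (by linarith)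
  rw [abs_le]
  constructor
  · push_cast at hlog2 ⊢; linarith
  · push_cast at hlog2 ⊢; linarith

private lemma aux_sin_main (v : ℂ) (hv : 0 < v.im) :
    |Real.log (‖Complex.sin ((Real.pi : ℂ) * v)‖) - Real.pi * v.im|
      ≤ max 0 (-Real.log (⨅ i : ℤ, ‖v - (i : ℂ)‖)) + 6 := by
  set I := ⨅ i : ℤ, ‖v - (i : ℂ)‖ with hIdef
  have hbdd : BddBelow (Set.range fun i : ℤ => ‖v - (i : ℂ)‖) :=
    ⟨0, by rintro x ⟨i, rfl⟩; exact norm_nonneg _⟩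
  have hIim : v.im ≤ I := by
    refine le_ciInf fun i => ?_
    have h1 := Complex.abs_im_le_norm (v - (i : ℂ))
    have h2 : (v - (i : ℂ)).im = v.im := by simp
    rw [h2] at h1
    exact (le_abs_self _).trans h1
  have hIpos : 0 < I := lt_of_lt_of_le hv hIim
  set m : ℤ := round v.re with hm
  set u : ℂ := v - (m : ℂ) with hu
  have hure : |u.re| ≤ 1 / 2 := by
    have : u.re = v.re - (m : ℝ) := by simp [hu]
    rw [this, hm]
    exact abs_sub_round v.re
  have huim : u.im = v.im := by simp [hu]
  have hIu : I ≤ ‖u‖ := ciInf_le hbdd m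
  have habs_eq : ‖Complex.sin ((Real.pi : ℂ) * v)‖
      = ‖Complex.sin ((Real.pi : ℂ) * u)‖ := by
    have harg : (Real.pi : ℂ) * v = (Real.pi : ℂ) * u + (m : ℂ) * (Real.pi : ℂ) := by
      rw [hu]; ring
    rw [harg, Complex.sin_add, Complex.sin_int_mul_pi, mul_zero, add_zero, norm_mul]
    have hcos : ‖Complex.cos ((m : ℂ) * (Real.pi : ℂ))‖ = 1 := by
      have h3 : ((m : ℂ) * (Real.pi : ℂ)) = (((m : ℝ) * Real.pi : ℝ) : ℂ) := by push_cast; ring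
      rw [h3, ← Complex.ofReal_cos, Complex.norm_real, Real.norm_eq_abs]
      exact Real.abs_cos_int_mul_pi m
    rw [hcos, mul_one]
  have hlow : I ≤ ‖Complex.sin ((Real.pi : ℂ) * v)‖ := by
    rw [habs_eq]
    exact hIu.trans (aux_sin_lower_small u hure (by rw [huim]; exact hv.le))
  have hsinpos : 0 < ‖Complex.sin ((Real.pi : ℂ) * v)‖ := lt_of_lt_of_le hIpos hlow
  have hW : ((Real.pi : ℂ) * v).im = Real.pi * v.im := by simp
  have hπ := Real.pi_pos
  have hup : Real.log (‖Complex.sin ((Real.pi : ℂ) * v)‖) ≤ Real.pi * v.im := by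
    have h1 := aux_sin_upper ((Real.pi : ℂ) * v) (by rw [hW]; positivity)
    rw [hW] at h1
    calc Real.log _ ≤ Real.log (Real.exp (Real.pi * v.im)) := Real.log_le_log hsinpos h1
      _ = Real.pi * v.im := Real.log_exp _
  have hmax0 : (0:ℝ) ≤ max 0 (-Real.log I) := le_max_left _ _
  rcases le_or_gt 1 v.im with hc | hc
  · -- big imaginary part
    have hWge : 1 ≤ ((Real.pi : ℂ) * v).im := by
      rw [hW]; nlinarith [Real.pi_gt_three]
    have h1 := aux_sin_lower_big ((Real.pi : ℂ) * v) hWge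
    rw [hW] at h1
    have h2 : Real.pi * v.im - Real.log 4 ≤
        Real.log (‖Complex.sin ((Real.pi : ℂ) * v)‖) := by
      have h3 : Real.log (Real.exp (Real.pi * v.im) / 4) ≤
          Real.log (‖Complex.sin ((Real.pi : ℂ) * v)‖) :=
        Real.log_le_log (by positivity) h1
      rwa [Real.log_div (Real.exp_ne_zero _) (by norm_num), Real.log_exp] at h3
    have hlog4 : Real.log 4 ≤ 2 := by
      rw [Real.log_le_iff_le_exp (by norm_num)]
      have he := Real.exp_one_gt_d9
      have h4 : Real.exp 2 = Real.exp 1 * Real.exp 1 := by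
        rw [← Real.exp_add]; norm_num
      nlinarith
    rw [abs_le]
    constructor
    · linarith
    · linarith
  · -- small imaginary part
    have hlogI : Real.log I ≤ Real.log (‖Complex.sin ((Real.pi : ℂ) * v)‖) :=
      Real.log_le_log hIpos hlow
    have hmax : -Real.log I ≤ max 0 (-Real.log I) := le_max_right _ _
    rw [abs_le]
    constructor
    · have : Real.pi * v.im ≤ Real.pi := by nlinarith
      have hπ4 : Real.pi < 4 := Real.pi_lt_d2.trans (by norm_num)
      linarith
    · linarith

set_option maxHeartbeats 1000000 in

/-- Lemma 4.13 (real-part content) of the paper: for `|z| > n` in the upper half-plane,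
the real part `R(z)` of the key function `D₂(z)` (with its exactly linear terms removed)
is approximated by `−π·Im z`, up to an error controlled by `log|z|` and the distance from
`nz` to the integer lattice. -/
theorem key_function_large_z_bound
    (C₀ : ℝ) (hC₀ : 1 ≤ C₀) :
    ∃ C : ℝ, 0 < C ∧ ∃ N₀ : ℕ, ∀ n : ℕ, N₀ ≤ n →
      ∀ M N' : ℤ, 1 ≤ M → 1 ≤ N' → (M : ℝ) ≤ C₀ * n → (N' : ℝ) ≤ C₀ * n →
      ∀ d : ℤ → ℤ, StrictMonoOn d (Set.Icc (-M) N') →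
        (∀ i ∈ Set.Icc (-M) N', |(d i : ℝ)| ≤ C₀ * n) →
      ∀ x₂ t₂ : ℤ, |(x₂ : ℝ)| ≤ C₀ * n → 1 ≤ t₂ → (t₂ : ℝ) ≤ C₀ * n →
      ∀ z : ℂ, 0 < z.im → (n : ℝ) < ‖z‖ →
        |(1 / (n : ℝ)) * ∑ i ∈ Finset.Icc (-M) N',
              Real.log (‖z - (d i : ℂ) / (n : ℂ)‖) +
            (1 / (n : ℝ)) * ∑ i ∈ Finset.Icc (-x₂ + 1) (-x₂ + t₂ - 1),
              Real.log (‖z + (i : ℂ) / (n : ℂ)‖) -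
            (1 / (n : ℝ)) * Real.log (‖Complex.sin ((Real.pi : ℂ) * n * z)‖) +
            Real.pi * z.im| ≤
          C * (max 0 (-(1 / (n : ℝ)) *
              Real.log (⨅ i : ℤ, ‖(n : ℂ) * z - (i : ℂ)‖)) +
            Real.log (‖z‖)) := by
  refine ⟨8 * C₀ + 2, by linarith, ⌈4 * C₀⌉₊ + 3, ?_⟩
  intro n hn M N' hM hN' hMle hN'le d _hd hdle x₂ t₂ hx₂ ht₂ ht₂le z hzim hzabs
  have hC0 : (0:ℝ) < C₀ := by linarith
  have hnceil : ((⌈4 * C₀⌉₊ : ℕ) : ℝ) + 3 ≤ (n : ℝ) := by exact_mod_cast hn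
  have hn4 : 4 * C₀ + 3 ≤ (n : ℝ) := le_trans (by linarith [Nat.le_ceil (4 * C₀)]) hnceil
  have hn7 : (7:ℝ) ≤ (n : ℝ) := by linarith
  have hnpos : (0:ℝ) < (n : ℝ) := by linarith
  have hnne : (n : ℂ) ≠ 0 := by
    simp only [ne_eq, Nat.cast_eq_zero]
    intro h; rw [h] at hnpos; simp at hnpos
  have hz7 : (7:ℝ) ≤ ‖z‖ := by linarith
  have hz3 : (3:ℝ) ≤ ‖z‖ := by linarith
  have hlogz : 1 ≤ Real.log (‖z‖) := by
    rw [Real.le_log_iff_exp_le (by linarith)]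
    have := Real.exp_one_lt_d9
    linarith
  -- per-term bound for sum A
  have hA : |∑ i ∈ Finset.Icc (-M) N',
      Real.log (‖z - (d i : ℂ) / (n : ℂ)‖)| ≤
      (3 * C₀ * (n:ℝ)) * (2 * Real.log (‖z‖)) := by
    have hterm : ∀ i ∈ Finset.Icc (-M) N',
        |Real.log (‖z - (d i : ℂ) / (n : ℂ)‖)| ≤ 2 * Real.log (‖z‖) := by
      intro i hi
      refine aux_log_term z _ hz3 ?_
      have hdi : |(d i : ℝ)| ≤ C₀ * n := hdle i (by
        rw [Finset.mem_Icc] at hi; exact Set.mem_Icc.2 hi)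
      have habs : ‖(d i : ℂ) / (n : ℂ)‖ = |(d i : ℝ)| / (n : ℝ) := by
        rw [norm_div]
        simp [Complex.norm_intCast, Complex.norm_natCast]
      rw [habs]
      rw [div_le_iff₀ hnpos]
      calc |(d i : ℝ)| ≤ C₀ * n := hdi
        _ ≤ (n:ℝ) / 4 * n := by nlinarith
        _ ≤ ‖z‖ / 2 * n := by nlinarith
    calc |∑ i ∈ Finset.Icc (-M) N', Real.log (‖z - (d i : ℂ) / (n : ℂ)‖)|
        ≤ ∑ i ∈ Finset.Icc (-M) N',
            |Real.log (‖z - (d i : ℂ) / (n : ℂ)‖)| :=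
          Finset.abs_sum_le_sum_abs _ _
      _ ≤ (Finset.Icc (-M) N').card • (2 * Real.log (‖z‖)) :=
          Finset.sum_le_card_nsmul _ _ _ hterm
      _ ≤ (3 * C₀ * (n:ℝ)) * (2 * Real.log (‖z‖)) := by
          rw [nsmul_eq_mul]
          have hcard : ((Finset.Icc (-M) N').card : ℝ) ≤ 3 * C₀ * (n:ℝ) := by
            have hc := Int.card_Icc_of_le (a := -M) (b := N') (by omega)
            have h1 : ((Finset.Icc (-M) N').card : ℝ) = (N' : ℝ) + 1 - -(M : ℝ) := by
              exact_mod_cast hc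
            rw [h1]
            have hnC : (n:ℝ) ≤ C₀ * n := by nlinarith
            linarith
          have hlogpos : (0:ℝ) ≤ 2 * Real.log (‖z‖) := by linarith
          exact mul_le_mul_of_nonneg_right hcard hlogpos
  -- per-term bound for sum B
  have hB : |∑ i ∈ Finset.Icc (-x₂ + 1) (-x₂ + t₂ - 1),
      Real.log (‖z + (i : ℂ) / (n : ℂ)‖)| ≤
      (C₀ * (n:ℝ)) * (2 * Real.log (‖z‖)) := by
    have hterm : ∀ i ∈ Finset.Icc (-x₂ + 1) (-x₂ + t₂ - 1),
        |Real.log (‖z + (i : ℂ) / (n : ℂ)‖)| ≤ 2 * Real.log (‖z‖) := by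
      intro i hi
      have heq : z + (i : ℂ) / (n : ℂ) = z - (-((i : ℂ) / (n : ℂ))) := by ring
      rw [heq]
      refine aux_log_term z _ hz3 ?_
      rw [norm_neg]
      have habs : ‖(i : ℂ) / (n : ℂ)‖ = |(i : ℝ)| / (n : ℝ) := by
        rw [norm_div]
        simp [Complex.norm_intCast, Complex.norm_natCast]
      rw [habs]
      rw [Finset.mem_Icc] at hi
      have hi1 : ((-x₂ + 1 : ℤ) : ℝ) ≤ (i : ℝ) := by exact_mod_cast hi.1
      have hi2 : ((i : ℝ)) ≤ ((-x₂ + t₂ - 1 : ℤ) : ℝ) := by exact_mod_cast hi.2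
      push_cast at hi1 hi2
      have ht₂R : (1:ℝ) ≤ (t₂ : ℝ) := by exact_mod_cast ht₂
      have hiabs : |(i : ℝ)| ≤ |(x₂ : ℝ)| + (t₂ : ℝ) := by
        rw [abs_le]
        have hb1 := neg_abs_le (x₂ : ℝ)
        have hb2 := le_abs_self (x₂ : ℝ)
        constructor
        · linarith
        · linarith
      rw [div_le_iff₀ hnpos]
      calc |(i : ℝ)| ≤ |(x₂ : ℝ)| + (t₂ : ℝ) := hiabs
        _ ≤ 2 * (C₀ * n) := by linarith
        _ ≤ (n:ℝ) / 2 * n := by nlinarith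
        _ ≤ ‖z‖ / 2 * n := by nlinarith
    calc |∑ i ∈ Finset.Icc (-x₂ + 1) (-x₂ + t₂ - 1),
        Real.log (‖z + (i : ℂ) / (n : ℂ)‖)|
        ≤ ∑ i ∈ Finset.Icc (-x₂ + 1) (-x₂ + t₂ - 1),
            |Real.log (‖z + (i : ℂ) / (n : ℂ)‖)| :=
          Finset.abs_sum_le_sum_abs _ _
      _ ≤ (Finset.Icc (-x₂ + 1) (-x₂ + t₂ - 1)).card • (2 * Real.log (‖z‖)) :=
          Finset.sum_le_card_nsmul _ _ _ hterm
      _ ≤ (C₀ * (n:ℝ)) * (2 * Real.log (‖z‖)) := by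
          rw [nsmul_eq_mul]
          have hcard : (((Finset.Icc (-x₂ + 1) (-x₂ + t₂ - 1)).card : ℝ)) ≤ C₀ * (n:ℝ) := by
            have hc := Int.card_Icc_of_le (a := -x₂ + 1) (b := -x₂ + t₂ - 1) (by omega)
            have h1 : ((Finset.Icc (-x₂ + 1) (-x₂ + t₂ - 1)).card : ℝ)
                = (-(x₂:ℝ) + t₂ - 1) + 1 - (-(x₂:ℝ) + 1) := by exact_mod_cast hc
            rw [h1]
            linarith
          have hlogpos : (0:ℝ) ≤ 2 * Real.log (‖z‖) := by linarith
          exact mul_le_mul_of_nonneg_right hcard hlogpos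
  -- the sine part
  set v : ℂ := (n : ℂ) * z with hvdef
  have hvim : v.im = (n : ℝ) * z.im := by simp [hvdef]
  have hv : 0 < v.im := by rw [hvim]; positivity
  have harg : (Real.pi : ℂ) * (n : ℂ) * z = (Real.pi : ℂ) * v := by rw [hvdef]; ring
  have hsin := aux_sin_main v hv
  set S := Real.log (‖Complex.sin ((Real.pi : ℂ) * (n : ℂ) * z)‖) with hSdef
  set I := ⨅ i : ℤ, ‖v - (i : ℂ)‖ with hIdef
  have hSv : S = Real.log (‖Complex.sin ((Real.pi : ℂ) * v)‖) := by rw [hSdef, harg]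
  have hmax0 : (0:ℝ) ≤ max 0 (-Real.log I) := le_max_left _ _
  have hsinpart : |Real.pi * z.im - (1 / (n:ℝ)) * S| ≤
      (1 / (n:ℝ)) * (max 0 (-Real.log I) + 6) := by
    have heq : Real.pi * z.im - (1 / (n:ℝ)) * S
        = (1 / (n:ℝ)) * -(S - Real.pi * v.im) := by
      rw [hvim]; field_simp; ring
    rw [heq, abs_mul, abs_of_pos (by positivity : (0:ℝ) < 1 / (n:ℝ)), abs_neg]
    have h1 : |S - Real.pi * v.im| ≤ max 0 (-Real.log I) + 6 := by rw [hSv]; exact hsin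
    exact mul_le_mul_of_nonneg_left h1 (by positivity)
  -- combine
  have hmaxeq : (1 / (n:ℝ)) * max 0 (-Real.log I)
      = max 0 (-(1 / (n:ℝ)) * Real.log I) := by
    rw [mul_max_of_nonneg _ _ (by positivity : (0:ℝ) ≤ 1 / (n:ℝ))]
    rw [mul_zero]
    ring_nf
  have htri : |(1 / (n : ℝ)) * ∑ i ∈ Finset.Icc (-M) N',
        Real.log (‖z - (d i : ℂ) / (n : ℂ)‖) +
      (1 / (n : ℝ)) * ∑ i ∈ Finset.Icc (-x₂ + 1) (-x₂ + t₂ - 1),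
        Real.log (‖z + (i : ℂ) / (n : ℂ)‖) -
      (1 / (n : ℝ)) * S + Real.pi * z.im|
      ≤ (1 / (n:ℝ)) * |∑ i ∈ Finset.Icc (-M) N',
          Real.log (‖z - (d i : ℂ) / (n : ℂ)‖)|
        + (1 / (n:ℝ)) * |∑ i ∈ Finset.Icc (-x₂ + 1) (-x₂ + t₂ - 1),
            Real.log (‖z + (i : ℂ) / (n : ℂ)‖)|
        + |Real.pi * z.im - (1 / (n:ℝ)) * S| := by
    have e1 : (1 / (n : ℝ)) * ∑ i ∈ Finset.Icc (-M) N',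
        Real.log (‖z - (d i : ℂ) / (n : ℂ)‖) +
      (1 / (n : ℝ)) * ∑ i ∈ Finset.Icc (-x₂ + 1) (-x₂ + t₂ - 1),
        Real.log (‖z + (i : ℂ) / (n : ℂ)‖) -
      (1 / (n : ℝ)) * S + Real.pi * z.im
      = ((1 / (n : ℝ)) * ∑ i ∈ Finset.Icc (-M) N',
        Real.log (‖z - (d i : ℂ) / (n : ℂ)‖) +
      (1 / (n : ℝ)) * ∑ i ∈ Finset.Icc (-x₂ + 1) (-x₂ + t₂ - 1),
        Real.log (‖z + (i : ℂ) / (n : ℂ)‖))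
      + (Real.pi * z.im - (1 / (n:ℝ)) * S) := by ring
    rw [e1]
    refine (abs_add_le _ _).trans ?_
    gcongr
    refine (abs_add_le _ _).trans ?_
    rw [abs_mul, abs_mul, abs_of_pos (by positivity : (0:ℝ) < 1 / (n:ℝ))]
  refine htri.trans ?_
  have hstep : (1 / (n:ℝ)) * |∑ i ∈ Finset.Icc (-M) N',
        Real.log (‖z - (d i : ℂ) / (n : ℂ)‖)|
      + (1 / (n:ℝ)) * |∑ i ∈ Finset.Icc (-x₂ + 1) (-x₂ + t₂ - 1),
          Real.log (‖z + (i : ℂ) / (n : ℂ)‖)|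
      + |Real.pi * z.im - (1 / (n:ℝ)) * S|
      ≤ (1 / (n:ℝ)) * ((3 * C₀ * (n:ℝ)) * (2 * Real.log (‖z‖)))
      + (1 / (n:ℝ)) * ((C₀ * (n:ℝ)) * (2 * Real.log (‖z‖)))
      + (1 / (n:ℝ)) * (max 0 (-Real.log I) + 6) := by
    have hnn : (0:ℝ) ≤ 1 / (n:ℝ) := by positivity
    exact add_le_add (add_le_add (mul_le_mul_of_nonneg_left hA hnn)
      (mul_le_mul_of_nonneg_left hB hnn)) hsinpart
  refine hstep.trans ?_
  have hsimp1 : (1 / (n:ℝ)) * ((3 * C₀ * (n:ℝ)) * (2 * Real.log (‖z‖)))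
      = 6 * C₀ * Real.log (‖z‖) := by field_simp; ring
  have hsimp2 : (1 / (n:ℝ)) * ((C₀ * (n:ℝ)) * (2 * Real.log (‖z‖)))
      = 2 * C₀ * Real.log (‖z‖) := by field_simp
  have hsimp3 : (1 / (n:ℝ)) * (max 0 (-Real.log I) + 6)
      = max 0 (-(1 / (n:ℝ)) * Real.log I) + 6 / (n:ℝ) := by
    rw [mul_add, hmaxeq]; ring_nf
  rw [hsimp1, hsimp2, hsimp3]
  have h6n : 6 / (n:ℝ) ≤ 1 := by
    rw [div_le_one hnpos]; linarith
  have hmax0' : (0:ℝ) ≤ max 0 (-(1 / (n:ℝ)) * Real.log I) := le_max_left _ _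
  have hprod : 0 ≤ (8 * C₀ + 1) * max 0 (-(1 / (n:ℝ)) * Real.log I) :=
    mul_nonneg (by linarith) hmax0'
  nlinarith [hprod, hlogz, h6n, hC0]
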